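/- With τ ≠ 0 a fixed real constant and L → ∞, one has √L ∫_{−√(log L/L)}^{0} (τ v − 2 v⁴ L) e^{−2v² L} dv = −(τ + o(1))/(4√L). In particular this quantity is asymptotically of exact order 1/√L, establishing that the error term O(1/√(log₂ x)) in the Gaussian approximation is optimal. -/

import Mathlib

set_option maxHeartbeats 1000000

open Real Filter intervalIntegral

/-- Antiderivative of `v ↦ v * exp (-2 v² L)`. -/
lemma opt_antideriv (L : ℝ) (hL : L ≠ 0) (v : ℝ) :
    HasDerivAt (fun w : ℝ => -Real.exp (-2 * w ^ 2 * L) / (4 * L))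
      (v * Real.exp (-2 * v ^ 2 * L)) v := by
  have h1 : HasDerivAt (fun w : ℝ => -2 * w ^ 2 * L) (-4 * v * L) v := by
    have := ((hasDerivAt_pow 2 v).const_mul (-2 : ℝ)).mul_const L
    refine this.congr_deriv ?_
    push_cast
    ring
  have h2 := (h1.exp.neg).div_const (4 * L)
  refine h2.congr_deriv ?_
  field_simp

/-- Pointwise bound `v⁴ exp (-2 v² L) ≤ 1/L²` for `L > 0`. -/
lemma opt_pointwise (L : ℝ) (hL : 0 < L) (v : ℝ) :
    v ^ 4 * Real.exp (-2 * v ^ 2 * L) ≤ 1 / L ^ 2 := by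
  have h1 : (0 : ℝ) ≤ v ^ 2 * L := mul_nonneg (sq_nonneg v) hL.le
  have h2 : v ^ 2 * L ≤ Real.exp (v ^ 2 * L) := by
    linarith [Real.add_one_le_exp (v ^ 2 * L)]
  have h3 : (v ^ 2 * L) ^ 2 ≤ Real.exp (v ^ 2 * L) ^ 2 :=
    pow_le_pow_left₀ h1 h2 2
  have e1 : Real.exp (-2 * v ^ 2 * L)
      = (Real.exp (v ^ 2 * L) * Real.exp (v ^ 2 * L))⁻¹ := by
    rw [← Real.exp_add, ← Real.exp_neg]
    ring_nf
  have hE : (0 : ℝ) < Real.exp (v ^ 2 * L) * Real.exp (v ^ 2 * L) := by positivity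
  rw [e1, ← div_eq_mul_inv, div_le_div_iff₀ hE (by positivity : (0:ℝ) < L ^ 2)]
  nlinarith [h3]

/-- Optimality integral: for fixed τ ≠ 0, as L → ∞,
√L ∫_{−√(log L/L)}^0 (τv − 2v⁴L) e^{−2v²L} dv = −(τ + o(1))/(4√L),
equivalently 4L·∫_{−√(log L/L)}^0 (τv − 2v⁴L) e^{−2v²L} dv → −τ. -/
theorem optimality_integral (τ : ℝ) (hτ : τ ≠ 0) :
    Filter.Tendsto (fun L : ℝ =>
        4 * L * ∫ v in (-Real.sqrt (Real.log L / L))..(0:ℝ),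
          (τ * v - 2 * v ^ 4 * L) * Real.exp (-2 * v ^ 2 * L))
      Filter.atTop (nhds (-τ)) := by
  set B : ℝ → ℝ := fun L =>
    ∫ v in (-Real.sqrt (Real.log L / L))..(0:ℝ), v ^ 4 * Real.exp (-2 * v ^ 2 * L)
    with hB
  -- the limit of the main term
  have hmain : Tendsto (fun L : ℝ => τ * ((L ^ 2)⁻¹ - 1)) atTop (nhds (-τ)) := by
    have h1 : Tendsto (fun L : ℝ => (L ^ 2)⁻¹) atTop (nhds 0) :=
      (tendsto_pow_atTop (two_ne_zero)).inv_tendsto_atTop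
    have := (h1.sub_const 1).const_mul τ
    simpa using this
  -- the limit of the error term
  have herr : Tendsto (fun L : ℝ => 8 * L ^ 2 * B L) atTop (nhds 0) := by
    have hbound : Tendsto (fun L : ℝ => 8 * Real.sqrt (Real.log L / L)) atTop (nhds 0) := by
      have h0 : Tendsto (fun L : ℝ => Real.log L / L) atTop (nhds 0) :=
        Real.isLittleO_log_id_atTop.tendsto_div_nhds_zero
      have h1 : Tendsto (fun L : ℝ => Real.sqrt (Real.log L / L)) atTop (nhds 0) := by
        have := (Real.continuous_sqrt.tendsto 0).comp h0
        simpa [Function.comp_def] using this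
      have := h1.const_mul (8 : ℝ)
      simpa using this
    apply tendsto_of_tendsto_of_tendsto_of_le_of_le' tendsto_const_nhds hbound
    · -- 0 ≤ 8 L² B L eventually
      filter_upwards [eventually_ge_atTop (1 : ℝ)] with L hL
      have hL0 : (0 : ℝ) < L := lt_of_lt_of_le one_pos hL
      have hBnn : 0 ≤ B L := by
        rw [hB]
        apply intervalIntegral.integral_nonneg (neg_nonpos.mpr (Real.sqrt_nonneg _))
        intro v _
        positivity
      positivity
    · -- 8 L² B L ≤ 8 √(log L / L) eventually
      filter_upwards [eventually_ge_atTop (1 : ℝ)] with L hL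
      have hL0 : (0 : ℝ) < L := lt_of_lt_of_le one_pos hL
      set a := Real.sqrt (Real.log L / L) with ha
      have ha0 : 0 ≤ a := Real.sqrt_nonneg _
      have hint : B L ≤ a * (1 / L ^ 2) := by
        rw [hB]
        calc ∫ v in (-a)..(0:ℝ), v ^ 4 * Real.exp (-2 * v ^ 2 * L)
            ≤ ∫ _v in (-a)..(0:ℝ), 1 / L ^ 2 := by
              apply intervalIntegral.integral_mono_on (by linarith)
              · exact (by fun_prop : Continuous fun v : ℝ =>
                  v ^ 4 * Real.exp (-2 * v ^ 2 * L)).intervalIntegrable _ _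
              · exact intervalIntegrable_const
              · intro v _
                exact opt_pointwise L hL0 v
          _ = a * (1 / L ^ 2) := by
              rw [intervalIntegral.integral_const]
              simp
      calc 8 * L ^ 2 * B L ≤ 8 * L ^ 2 * (a * (1 / L ^ 2)) := by
            apply mul_le_mul_of_nonneg_left hint (by positivity)
        _ = 8 * a := by field_simp
  -- combine
  have hcomb := hmain.sub herr
  rw [sub_zero] at hcomb
  apply hcomb.congr'
  filter_upwards [eventually_ge_atTop (1 : ℝ)] with L hL
  have hL0 : (0 : ℝ) < L := lt_of_lt_of_le one_pos hL
  have hlog : 0 ≤ Real.log L := Real.log_nonneg hL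
  set a := Real.sqrt (Real.log L / L) with ha
  have ha0 : 0 ≤ a := Real.sqrt_nonneg _
  have ha2 : a ^ 2 = Real.log L / L := Real.sq_sqrt (by positivity)
  have ha2L : a ^ 2 * L = Real.log L := by
    rw [ha2]; field_simp
  -- split the integrand
  have hsplit : (∫ v in (-a)..(0:ℝ),
      (τ * v - 2 * v ^ 4 * L) * Real.exp (-2 * v ^ 2 * L))
      = τ * (∫ v in (-a)..(0:ℝ), v * Real.exp (-2 * v ^ 2 * L)) - 2 * L * B L := by
    rw [hB, ← intervalIntegral.integral_const_mul, ← intervalIntegral.integral_const_mul,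
      ← intervalIntegral.integral_sub]
    · congr 1; funext v; ring
    · exact (by fun_prop : Continuous fun v : ℝ =>
        τ * (v * Real.exp (-2 * v ^ 2 * L))).intervalIntegrable _ _
    · exact (by fun_prop : Continuous fun v : ℝ =>
        2 * L * (v ^ 4 * Real.exp (-2 * v ^ 2 * L))).intervalIntegrable _ _
  -- evaluate the first integral
  have hA : (∫ v in (-a)..(0:ℝ), v * Real.exp (-2 * v ^ 2 * L))
      = ((L ^ 2)⁻¹ - 1) / (4 * L) := by
    have := intervalIntegral.integral_eq_sub_of_hasDerivAt
      (a := -a) (b := (0:ℝ))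
      (f := fun w : ℝ => -Real.exp (-2 * w ^ 2 * L) / (4 * L))
      (fun v _ => opt_antideriv L hL0.ne' v)
      ((by fun_prop : Continuous fun v : ℝ =>
        v * Real.exp (-2 * v ^ 2 * L)).intervalIntegrable _ _)
    rw [this]
    beta_reduce
    have he : Real.exp (-2 * (-a) ^ 2 * L) = (L ^ 2)⁻¹ := by
      have : -2 * (-a) ^ 2 * L = -(Real.log L) + -(Real.log L) := by
        have : (-a) ^ 2 * L = Real.log L := by rw [neg_pow]; simpa using ha2L
        nlinarith [this]
      rw [this, Real.exp_add, Real.exp_neg, Real.exp_log hL0, ← mul_inv, sq]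
    rw [he]
    norm_num
    ring
  rw [hsplit, hA]
  field_simp
  ring
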